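/- arXiv:2204.06730 — 2 statements merged into one kernel-verified Lean document; each statement's English description precedes it below -/
import Mathlib

section
/- (Proof by cases) For all sets of formulas Γ and all formulas A, B, C of L⊃: if Γ ∪ {A} ⊢ C and Γ ∪ {B} ⊢ C, then Γ ∪ {A∨B} ⊢ C, where ⊢ is derivability in the Hilbert system S. -/
/-- Formulas of the language L⊃ : propositional variables with ∧, ∨,
    intuitionistic → (`imp`) and classical ⊃ (`sup`). -/
inductive Formula : Type
  | var : ℕ → Formula
  | and : Formula → Formula → Formula
  | or  : Formula → Formula → Formula
  | imp : Formula → Formula → Formula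
  | sup : Formula → Formula → Formula

/-- The Hilbert system S : `SDeriv Γ A` means Γ ⊢ A. -/
inductive SDeriv : Set Formula → Formula → Prop
  | hyp {Γ A} : A ∈ Γ → SDeriv Γ A
  | ax1 {Γ} (A B : Formula) : SDeriv Γ (A.imp (B.imp A))
  | ax2 {Γ} (A B C : Formula) :
      SDeriv Γ ((A.imp (B.imp C)).imp ((A.imp B).imp (A.imp C)))
  | ax3 {Γ} (A B : Formula) : SDeriv Γ ((A.and B).imp A)
  | ax4 {Γ} (A B : Formula) : SDeriv Γ ((A.and B).imp B)
  | ax5 {Γ} (A B C : Formula) :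
      SDeriv Γ ((C.imp A).imp ((C.imp B).imp (C.imp (A.and B))))
  | ax6 {Γ} (A B : Formula) : SDeriv Γ (A.imp (A.or B))
  | ax7 {Γ} (A B : Formula) : SDeriv Γ (B.imp (A.or B))
  | ax8 {Γ} (A B C : Formula) :
      SDeriv Γ ((A.imp C).imp ((B.imp C).imp ((A.or B).imp C)))
  | axM1 {Γ} (A B : Formula) : SDeriv Γ ((A.imp B).sup (A.sup B))
  | axM2 {Γ} (A B C : Formula) :
      SDeriv Γ ((A.sup (B.sup C)).imp ((A.sup B).sup (A.sup C)))
  | axM3 {Γ} (A B C : Formula) :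
      SDeriv Γ ((A.sup (B.imp C)).imp (B.imp (A.sup C)))
  | axM4 {Γ} (A B C : Formula) :
      SDeriv Γ ((A.imp (B.sup C)).imp (B.sup (A.imp C)))
  | axM5 {Γ} (A B C : Formula) :
      SDeriv Γ (((A.sup B).sup C).imp ((A.sup C).imp C))
  | axM6 {Γ} (A B C : Formula) :
      SDeriv Γ ((A.sup C).imp ((B.sup C).imp ((A.or B).sup C)))
  | mp {Γ A B} : SDeriv Γ A → SDeriv Γ (A.sup B) → SDeriv Γ B


/-- Detachment for the intuitionistic arrow via AxM1. -/
lemma mpImp {Γ : Set Formula} {X Y : Formula}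
    (h : SDeriv Γ (X.imp Y)) (hx : SDeriv Γ X) : SDeriv Γ Y :=
  SDeriv.mp hx (SDeriv.mp h (SDeriv.axM1 X Y))

lemma imp_id {Γ : Set Formula} (A : Formula) : SDeriv Γ (A.imp A) :=
  mpImp (mpImp (SDeriv.ax2 A (A.imp A) A) (SDeriv.ax1 A (A.imp A)))
    (SDeriv.ax1 A A)

lemma sup_id {Γ : Set Formula} (A : Formula) : SDeriv Γ (A.sup A) :=
  SDeriv.mp (imp_id A) (SDeriv.axM1 A A)

/-- Monotonicity. -/
lemma SDeriv.mono {Γ Δ : Set Formula} {A : Formula}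
    (h : SDeriv Γ A) (hs : Γ ⊆ Δ) : SDeriv Δ A := by
  induction h with
  | hyp hm => exact SDeriv.hyp (hs hm)
  | mp _ _ ih1 ih2 => exact SDeriv.mp ih1 ih2
  | ax1 A B => exact SDeriv.ax1 A B
  | ax2 A B C => exact SDeriv.ax2 A B C
  | ax3 A B => exact SDeriv.ax3 A B
  | ax4 A B => exact SDeriv.ax4 A B
  | ax5 A B C => exact SDeriv.ax5 A B C
  | ax6 A B => exact SDeriv.ax6 A B
  | ax7 A B => exact SDeriv.ax7 A B
  | ax8 A B C => exact SDeriv.ax8 A B C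
  | axM1 A B => exact SDeriv.axM1 A B
  | axM2 A B C => exact SDeriv.axM2 A B C
  | axM3 A B C => exact SDeriv.axM3 A B C
  | axM4 A B C => exact SDeriv.axM4 A B C
  | axM5 A B C => exact SDeriv.axM5 A B C
  | axM6 A B C => exact SDeriv.axM6 A B C

lemma sup_of_thm {Γ : Set Formula} {A C : Formula}
    (h : SDeriv Γ C) : SDeriv Γ (A.sup C) :=
  SDeriv.mp (mpImp (SDeriv.ax1 C A) h) (SDeriv.axM1 A C)

/-- Deduction theorem for ⊃. -/
lemma deduction {Γ : Set Formula} {A C : Formula}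
    (h : SDeriv (Γ ∪ {A}) C) : SDeriv Γ (A.sup C) := by
  have key : ∀ Δ C, SDeriv Δ C → ∀ (Γ : Set Formula) (A : Formula),
      Δ = Γ ∪ {A} → SDeriv Γ (A.sup C) := by
    intro Δ C h
    induction h with
    | hyp hm =>
      intro Γ A hΔ
      subst hΔ
      rcases hm with hm | hm
      · exact sup_of_thm (SDeriv.hyp hm)
      · rw [Set.mem_singleton_iff] at hm; subst hm; exact sup_id _
    | mp _ _ ih1 ih2 =>
      intro Γ A hΔ
      exact SDeriv.mp (ih1 Γ A hΔ) (mpImp (SDeriv.axM2 _ _ _) (ih2 Γ A hΔ))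
    | ax1 A B => exact fun Γ X _ => sup_of_thm (SDeriv.ax1 A B)
    | ax2 A B C => exact fun Γ X _ => sup_of_thm (SDeriv.ax2 A B C)
    | ax3 A B => exact fun Γ X _ => sup_of_thm (SDeriv.ax3 A B)
    | ax4 A B => exact fun Γ X _ => sup_of_thm (SDeriv.ax4 A B)
    | ax5 A B C => exact fun Γ X _ => sup_of_thm (SDeriv.ax5 A B C)
    | ax6 A B => exact fun Γ X _ => sup_of_thm (SDeriv.ax6 A B)
    | ax7 A B => exact fun Γ X _ => sup_of_thm (SDeriv.ax7 A B)
    | ax8 A B C => exact fun Γ X _ => sup_of_thm (SDeriv.ax8 A B C)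
    | axM1 A B => exact fun Γ X _ => sup_of_thm (SDeriv.axM1 A B)
    | axM2 A B C => exact fun Γ X _ => sup_of_thm (SDeriv.axM2 A B C)
    | axM3 A B C => exact fun Γ X _ => sup_of_thm (SDeriv.axM3 A B C)
    | axM4 A B C => exact fun Γ X _ => sup_of_thm (SDeriv.axM4 A B C)
    | axM5 A B C => exact fun Γ X _ => sup_of_thm (SDeriv.axM5 A B C)
    | axM6 A B C => exact fun Γ X _ => sup_of_thm (SDeriv.axM6 A B C)
  exact key _ _ h Γ A rfl

/-- Proof by cases: if Γ,A ⊢ C and Γ,B ⊢ C then Γ, A∨B ⊢ C. -/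
theorem proof_by_cases (Γ : Set Formula) (A B C : Formula)
    (hA : SDeriv (Γ ∪ {A}) C) (hB : SDeriv (Γ ∪ {B}) C) :
    SDeriv (Γ ∪ {A.or B}) C := by
  have h1 : SDeriv Γ (A.sup C) := deduction hA
  have h2 : SDeriv Γ (B.sup C) := deduction hB
  have h3 : SDeriv Γ ((A.or B).sup C) :=
    mpImp (mpImp (SDeriv.axM6 A B C) h1) h2
  exact SDeriv.mp (SDeriv.hyp (Or.inr rfl))
    (h3.mono Set.subset_union_left)
end

section
/- If ⟨Σ, Δ⟩ is a Π-partition (with respect to derivability in the Hilbert system S over L⊃), then Σ is a prime Π-theory. -/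
/-- `PiTheory P S` : S is a P-theory (clauses (a) and (b)), where ⊢_P is
    derivability in S from the extra assumptions P. -/
def PiTheory (P S : Set Formula) : Prop :=
  (∀ A B : Formula, A ∈ S → B ∈ S → Formula.and A B ∈ S) ∧
  (∀ A B : Formula, SDeriv P (A.imp B) → A ∈ S → B ∈ S)

/-- S is prime. -/
def IsPrimeSet (S : Set Formula) : Prop :=
  ∀ A B : Formula, Formula.or A B ∈ S → A ∈ S ∨ B ∈ S

/-- Conjunction A ∧ B₁ ∧ ⋯ ∧ Bₙ of a nonempty list. -/
def conjFold : Formula → List Formula → Formula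
  | A, [] => A
  | A, B :: L => A.and (conjFold B L)

/-- Disjunction A ∨ B₁ ∨ ⋯ ∨ Bₙ of a nonempty list. -/
def disjFold : Formula → List Formula → Formula
  | A, [] => A
  | A, B :: L => A.or (disjFold B L)

/-- `SeqDeriv P S D` : Σ ⊢_Π Δ, i.e. Σ∪Π ⊢ D₁ ∨ ⋯ ∨ Dₙ for some D₁,…,Dₙ ∈ Δ. -/
def SeqDeriv (P S D : Set Formula) : Prop :=
  ∃ (D₀ : Formula) (Ds : List Formula), D₀ ∈ D ∧ (∀ X ∈ Ds, X ∈ D) ∧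
    SDeriv (S ∪ P) (disjFold D₀ Ds)

/-- `ImpDeriv P S D` : ⊢_Π Σ→Δ, i.e. ⊢_Π (C₁∧⋯∧Cₙ)→(D₁∨⋯∨Dₘ)
    for some C₁,…,Cₙ ∈ Σ and D₁,…,Dₘ ∈ Δ. -/
def ImpDeriv (P S D : Set Formula) : Prop :=
  ∃ (C₀ : Formula) (Cs : List Formula) (D₀ : Formula) (Ds : List Formula),
    C₀ ∈ S ∧ (∀ X ∈ Cs, X ∈ S) ∧ D₀ ∈ D ∧ (∀ X ∈ Ds, X ∈ D) ∧
    SDeriv P ((conjFold C₀ Cs).imp (disjFold D₀ Ds))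

/-- ⟨Σ,Δ⟩ is a Π-partition. -/
def PiPartition (P S D : Set Formula) : Prop :=
  S ∪ D = Set.univ ∧ ¬ ImpDeriv P S D

/-- S is P-deductively closed. -/
def PiDedClosed (P S : Set Formula) : Prop :=
  ∀ A : Formula, SDeriv (S ∪ P) A → A ∈ S

/-- Intuitionistic modus ponens is derivable via AxM1 and MP. -/
lemma SDeriv.mpi {Γ} {A B : Formula} (h1 : SDeriv Γ A)
    (h2 : SDeriv Γ (A.imp B)) : SDeriv Γ B :=
  .mp h1 (.mp h2 (.axM1 A B))

lemma SDeriv.id {Γ} (A : Formula) : SDeriv Γ (A.imp A) :=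
  .mpi (.ax1 A A) (.mpi (.ax1 A (A.imp A)) (.ax2 A (A.imp A) A))

/-- If ⟨Σ,Δ⟩ is a Π-partition then Σ is a prime Π-theory. -/
theorem partition_prime_theory (P S D : Set Formula)
    (h : PiPartition P S D) : PiTheory P S ∧ IsPrimeSet S := by
  obtain ⟨huniv, hnd⟩ := h
  have hD : ∀ A : Formula, A ∉ S → A ∈ D := by
    intro A hA
    have : A ∈ S ∪ D := huniv ▸ Set.mem_univ A
    rcases this with h' | h'
    · exact absurd h' hA
    · exact h'
  refine ⟨⟨?_, ?_⟩, ?_⟩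
  · intro A B hA hB
    by_contra hAB
    exact hnd ⟨A, [B], A.and B, [], hA,
      (by simp [hB]), hD _ hAB, (by simp), SDeriv.id _⟩
  · intro A B hAB hA
    by_contra hB
    exact hnd ⟨A, [], B, [], hA, (by simp), hD _ hB, (by simp), hAB⟩
  · intro A B hAB
    by_contra hcon
    push_neg at hcon
    exact hnd ⟨A.or B, [], A, [B], hAB, (by simp), hD _ hcon.1,
      (by simp [hD _ hcon.2]), SDeriv.id _⟩
end
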